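/- If h : ℝ → ℝ is bounded and measurable, then the solution y of the Stein equation satisfies ‖y'‖_∞ ≤ 4‖h‖_∞, where y'(x) := (1−ψ)x y(x) + h(x) − h̄_ψ. -/

import Mathlib

open MeasureTheory ProbabilityTheory Real Set Filter
open scoped NNReal ENNReal

noncomputable section


/-- `h̄_ψ = E h(N)` for `N ~ N(0, (1-ψ)⁻¹)`. -/
def gaussMean (ψ : ℝ) (h : ℝ → ℝ) : ℝ :=
  ∫ x, h x ∂(gaussianReal 0 (Real.toNNReal (1 - ψ)⁻¹))

/-- The bounded solution `y` of the Stein equation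
`y'(x) - (1-ψ) x y(x) = h(x) - h̄_ψ`, given explicitly by
`y(x) = -e^{(1-ψ)x²/2} ∫_x^∞ e^{-(1-ψ)t²/2} (h(t) - h̄_ψ) dt`. -/
def steinSol (ψ : ℝ) (h : ℝ → ℝ) (x : ℝ) : ℝ :=
  - Real.exp ((1 - ψ) * x ^ 2 / 2) *
      ∫ t in Set.Ioi x, Real.exp (-((1 - ψ) * t ^ 2 / 2)) * (h t - gaussMean ψ h)

lemma myIntExp {a : ℝ} (ha : 0 < a) :
    Integrable (fun t : ℝ => Real.exp (-(a * t ^ 2 / 2))) := by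
  have := integrable_exp_neg_mul_sq (half_pos ha)
  refine this.congr (Filter.Eventually.of_forall fun t => ?_)
  ring_nf

lemma myIntExpMul {a : ℝ} (ha : 0 < a) {g : ℝ → ℝ} (hg : Measurable g) {D : ℝ}
    (hD : ∀ t, |g t| ≤ D) :
    Integrable (fun t : ℝ => Real.exp (-(a * t ^ 2 / 2)) * g t) := by
  have h1 := (myIntExp ha).bdd_mul (f := g) hg.aestronglyMeasurable (c := D) (Eventually.of_forall fun t => hD t)
  refine h1.congr (Eventually.of_forall fun t => mul_comm _ _)

lemma myDeriv {a : ℝ} (t : ℝ) :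
    HasDerivAt (fun t : ℝ => Real.exp (-(a * t ^ 2 / 2))) (-(a * t) * Real.exp (-(a * t ^ 2 / 2))) t := by
  have h1 : HasDerivAt (fun t : ℝ => -(a * t ^ 2 / 2)) (-(a * t)) t := by
    have : HasDerivAt (fun t : ℝ => -(a * t ^ 2 / 2)) (-(a * ((2:ℕ) * t ^ (2 - 1)) / 2)) t :=
      (((hasDerivAt_pow 2 t).const_mul a).div_const 2).neg
    convert this using 1
    ring
  simpa [mul_comm] using h1.exp

lemma myTendstoTop {a : ℝ} (ha : 0 < a) :
    Tendsto (fun t : ℝ => Real.exp (-(a * t ^ 2 / 2))) atTop (nhds 0) := by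
  have h1 : Tendsto (fun t : ℝ => t ^ 2) atTop atTop := tendsto_pow_atTop two_ne_zero
  have h2 := (h1.const_mul_atTop ha).atTop_div_const (by norm_num : (0:ℝ) < 2)
  have h3 : Tendsto (fun t : ℝ => -(a * t ^ 2 / 2)) atTop atBot :=
    tendsto_neg_atTop_atBot.comp h2
  exact Real.tendsto_exp_atBot.comp h3

lemma myTendstoBot {a : ℝ} (ha : 0 < a) :
    Tendsto (fun t : ℝ => Real.exp (-(a * t ^ 2 / 2))) atBot (nhds 0) := by
  have h1 : Tendsto (fun t : ℝ => t ^ 2) atBot atTop := by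
    have h0 : Tendsto (fun t : ℝ => (-t) ^ 2) atBot atTop :=
      (tendsto_pow_atTop two_ne_zero).comp tendsto_neg_atBot_atTop
    exact h0.congr fun t => by ring
  have h2 := (h1.const_mul_atTop ha).atTop_div_const (by norm_num : (0:ℝ) < 2)
  have h3 : Tendsto (fun t : ℝ => -(a * t ^ 2 / 2)) atBot atBot :=
    tendsto_neg_atTop_atBot.comp h2
  exact Real.tendsto_exp_atBot.comp h3

lemma myIntOnMul {a : ℝ} (ha : 0 < a) (s : Set ℝ) :
    IntegrableOn (fun t : ℝ => t * Real.exp (-(a * t ^ 2 / 2))) s := by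
  have := integrable_mul_exp_neg_mul_sq (half_pos ha)
  refine (this.congr (Filter.Eventually.of_forall fun t => ?_)).integrableOn
  ring_nf

lemma myFTC_Ioi {a : ℝ} (ha : 0 < a) (x : ℝ) :
    ∫ t in Ioi x, t * Real.exp (-(a * t ^ 2 / 2)) = Real.exp (-(a * x ^ 2 / 2)) / a := by
  have h := integral_Ioi_of_hasDerivAt_of_tendsto'
    (f := fun t => -(Real.exp (-(a * t ^ 2 / 2)) / a))
    (f' := fun t => t * Real.exp (-(a * t ^ 2 / 2)))
    (a := x) (m := 0)
    (fun t _ => by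
      have : HasDerivAt (fun t => -(Real.exp (-(a * t ^ 2 / 2)) / a)) (-(-(a * t) * Real.exp (-(a * t ^ 2 / 2)) / a)) t :=
        ((myDeriv (a := a) t).div_const a).neg
      refine this.congr_deriv ?_
      field_simp)
    (myIntOnMul ha _)
    (by simpa using ((myTendstoTop ha).div_const a).neg)
  rw [h]; ring

lemma myFTC_Iic {a : ℝ} (ha : 0 < a) (x : ℝ) :
    ∫ t in Iic x, (-t) * Real.exp (-(a * t ^ 2 / 2)) = Real.exp (-(a * x ^ 2 / 2)) / a := by
  have h := integral_Iic_of_hasDerivAt_of_tendsto'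
    (f := fun t => Real.exp (-(a * t ^ 2 / 2)) / a)
    (f' := fun t => (-t) * Real.exp (-(a * t ^ 2 / 2)))
    (a := x) (m := 0)
    (fun t _ => by
      have : HasDerivAt (fun t => Real.exp (-(a * t ^ 2 / 2)) / a) (-(a * t) * Real.exp (-(a * t ^ 2 / 2)) / a) t :=
        (myDeriv (a := a) t).div_const a
      refine this.congr_deriv ?_
      field_simp)
    (by
      refine ((myIntOnMul ha (Iic x)).neg).congr (Filter.Eventually.of_forall fun t => ?_)
      simp only [Pi.neg_apply]; ring)
    (by simpa using (myTendstoBot ha).div_const a)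
  rw [h]; ring


lemma myKeyIoi {a x D : ℝ} (ha : 0 < a) (hx : 0 < x) {g : ℝ → ℝ} (hg : Measurable g)
    (hD : ∀ t, |g t| ≤ D) :
    |∫ t in Ioi x, Real.exp (-(a * t ^ 2 / 2)) * g t| ≤
      D / (a * x) * Real.exp (-(a * x ^ 2 / 2)) := by
  have hInt := myIntExpMul ha hg hD
  have htInt := myIntOnMul ha (Ioi x)
  have step1 : |∫ t in Ioi x, Real.exp (-(a * t ^ 2 / 2)) * g t| ≤
      ∫ t in Ioi x, |Real.exp (-(a * t ^ 2 / 2)) * g t| := by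
    have hn := norm_integral_le_integral_norm (μ := volume.restrict (Ioi x))
        (fun t => Real.exp (-(a * t ^ 2 / 2)) * g t)
    simp only [Real.norm_eq_abs] at hn
    exact hn
  have step2 : ∫ t in Ioi x, |Real.exp (-(a * t ^ 2 / 2)) * g t| ≤
      ∫ t in Ioi x, (D / x) * (t * Real.exp (-(a * t ^ 2 / 2))) := by
    refine setIntegral_mono_on hInt.abs.integrableOn (htInt.const_mul _)
      measurableSet_Ioi fun t ht => ?_
    have ht' : x ≤ t := le_of_lt ht
    have hexp : (0:ℝ) < Real.exp (-(a * t ^ 2 / 2)) := Real.exp_pos _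
    have h1 : |Real.exp (-(a * t ^ 2 / 2)) * g t| ≤ Real.exp (-(a * t ^ 2 / 2)) * D := by
      rw [abs_mul, abs_of_pos hexp]
      exact mul_le_mul_of_nonneg_left (hD t) hexp.le
    refine h1.trans ?_
    have h2 : Real.exp (-(a * t ^ 2 / 2)) * D ≤ (t / x) * Real.exp (-(a * t ^ 2 / 2)) * D := by
      have hD0 : 0 ≤ D := (abs_nonneg _).trans (hD 0)
      have h3 : (1:ℝ) ≤ t / x := (one_le_div hx).mpr ht'
      nlinarith [mul_nonneg (mul_nonneg (sub_nonneg.mpr h3) hexp.le) hD0]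
    refine h2.trans_eq ?_
    field_simp
  have step3 : ∫ t in Ioi x, (D / x) * (t * Real.exp (-(a * t ^ 2 / 2))) =
      D / (a * x) * Real.exp (-(a * x ^ 2 / 2)) := by
    rw [integral_const_mul, myFTC_Ioi ha]
    ring
  linarith [step1, step2, step3.le, step3.ge]

lemma myKeyIic {a x D : ℝ} (ha : 0 < a) (hx : x < 0) {g : ℝ → ℝ} (hg : Measurable g)
    (hD : ∀ t, |g t| ≤ D) :
    |∫ t in Iic x, Real.exp (-(a * t ^ 2 / 2)) * g t| ≤
      D / (a * (-x)) * Real.exp (-(a * x ^ 2 / 2)) := by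
  have hInt := myIntExpMul ha hg hD
  have htInt : IntegrableOn (fun t : ℝ => (-t) * Real.exp (-(a * t ^ 2 / 2))) (Iic x) := by
    refine ((myIntOnMul ha (Iic x)).neg).congr (Filter.Eventually.of_forall fun t => ?_)
    simp only [Pi.neg_apply]; ring
  have step1 : |∫ t in Iic x, Real.exp (-(a * t ^ 2 / 2)) * g t| ≤
      ∫ t in Iic x, |Real.exp (-(a * t ^ 2 / 2)) * g t| := by
    have hn := norm_integral_le_integral_norm (μ := volume.restrict (Iic x))
        (fun t => Real.exp (-(a * t ^ 2 / 2)) * g t)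
    simp only [Real.norm_eq_abs] at hn
    exact hn
  have step2 : ∫ t in Iic x, |Real.exp (-(a * t ^ 2 / 2)) * g t| ≤
      ∫ t in Iic x, (D / (-x)) * ((-t) * Real.exp (-(a * t ^ 2 / 2))) := by
    refine setIntegral_mono_on hInt.abs.integrableOn (htInt.const_mul _)
      measurableSet_Iic fun t ht => ?_
    have ht' : t ≤ x := ht
    have hexp : (0:ℝ) < Real.exp (-(a * t ^ 2 / 2)) := Real.exp_pos _
    have h1 : |Real.exp (-(a * t ^ 2 / 2)) * g t| ≤ Real.exp (-(a * t ^ 2 / 2)) * D := by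
      rw [abs_mul, abs_of_pos hexp]
      exact mul_le_mul_of_nonneg_left (hD t) hexp.le
    refine h1.trans ?_
    have h2 : Real.exp (-(a * t ^ 2 / 2)) * D ≤ ((-t) / (-x)) * Real.exp (-(a * t ^ 2 / 2)) * D := by
      have hD0 : 0 ≤ D := (abs_nonneg _).trans (hD 0)
      have h3 : (1:ℝ) ≤ (-t) / (-x) := (one_le_div (by linarith)).mpr (by linarith)
      nlinarith [mul_nonneg (mul_nonneg (sub_nonneg.mpr h3) hexp.le) hD0]
    refine h2.trans_eq ?_
    field_simp
  have step3 : ∫ t in Iic x, (D / (-x)) * ((-t) * Real.exp (-(a * t ^ 2 / 2))) =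
      D / (a * (-x)) * Real.exp (-(a * x ^ 2 / 2)) := by
    rw [integral_const_mul, myFTC_Iic ha]
    ring
  linarith [step1, step2, step3.le, step3.ge]

lemma myGaussMeanRepr (ψ : ℝ) (hψ1 : ψ < 1) (h : ℝ → ℝ) :
    gaussMean ψ h = (Real.sqrt (2 * π * (1 - ψ)⁻¹))⁻¹ *
      ∫ x, Real.exp (-((1 - ψ) * x ^ 2 / 2)) * h x := by
  set a := 1 - ψ with ha_def
  have ha : 0 < a := by simp [ha_def]; linarith
  have hv : (Real.toNNReal a⁻¹) ≠ 0 := by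
    simp [Real.toNNReal_pos.mpr (inv_pos.mpr ha) |>.ne']
  rw [gaussMean, gaussianReal_of_var_ne_zero _ hv]
  have hpdf : gaussianPDF 0 (Real.toNNReal a⁻¹) = fun x =>
      ((Real.toNNReal (gaussianPDFReal 0 (Real.toNNReal a⁻¹) x) : ℝ≥0) : ℝ≥0∞) := rfl
  rw [hpdf, integral_withDensity_eq_integral_smul
    ((measurable_gaussianPDFReal 0 _).real_toNNReal)]
  have hcoe : ((Real.toNNReal a⁻¹ : ℝ≥0) : ℝ) = a⁻¹ :=
    Real.coe_toNNReal _ (inv_pos.mpr ha).le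
  have hstep : ∀ x : ℝ, (Real.toNNReal (gaussianPDFReal 0 (Real.toNNReal a⁻¹) x)) • h x =
      (Real.sqrt (2 * π * a⁻¹))⁻¹ * (Real.exp (-(a * x ^ 2 / 2)) * h x) := by
    intro x
    rw [NNReal.smul_def, Real.coe_toNNReal _ (gaussianPDFReal_nonneg _ _ _)]
    rw [gaussianPDFReal, hcoe]
    rw [show -(x - 0) ^ 2 / (2 * a⁻¹) = -(a * x ^ 2 / 2) by field_simp; ring]
    rw [smul_eq_mul, mul_assoc]
  simp only [hstep]
  rw [integral_const_mul]

lemma myIntExpEq {a : ℝ} (ha : 0 < a) :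
    ∫ t : ℝ, Real.exp (-(a * t ^ 2 / 2)) = Real.sqrt (2 * π * a⁻¹) := by
  have h1 := integral_gaussian (a / 2)
  have h2 : ∀ t : ℝ, Real.exp (-(a / 2) * t ^ 2) = Real.exp (-(a * t ^ 2 / 2)) := by
    intro t; congr 1; ring
  simp only [h2] at h1
  rw [h1]
  congr 1
  field_simp

lemma myTotalZero (ψ : ℝ) (hψ1 : ψ < 1) (h : ℝ → ℝ) (hmeas : Measurable h) {C : ℝ}
    (hC : ∀ x, |h x| ≤ C) :
    ∫ t : ℝ, Real.exp (-((1 - ψ) * t ^ 2 / 2)) * (h t - gaussMean ψ h) = 0 := by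
  set a := 1 - ψ with ha_def
  have ha : 0 < a := by simp [ha_def]; linarith
  set m := gaussMean ψ h with hm_def
  have hint1 : Integrable (fun t : ℝ => Real.exp (-(a * t ^ 2 / 2)) * h t) :=
    myIntExpMul ha hmeas hC
  have hint2 : Integrable (fun t : ℝ => Real.exp (-(a * t ^ 2 / 2)) * m) :=
    (myIntExp ha).mul_const m
  have hsplit : ∫ t : ℝ, Real.exp (-(a * t ^ 2 / 2)) * (h t - m) =
      (∫ t : ℝ, Real.exp (-(a * t ^ 2 / 2)) * h t) -
        ∫ t : ℝ, Real.exp (-(a * t ^ 2 / 2)) * m := by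
    rw [← integral_sub hint1 hint2]
    refine integral_congr_ae (Filter.Eventually.of_forall fun t => ?_)
    ring
  have hpos : 0 < Real.sqrt (2 * π * a⁻¹) :=
    Real.sqrt_pos.mpr (by positivity)
  have h2 : ∫ t : ℝ, Real.exp (-(a * t ^ 2 / 2)) * m = Real.sqrt (2 * π * a⁻¹) * m := by
    rw [integral_mul_const, myIntExpEq ha]
  have h3 : ∫ t : ℝ, Real.exp (-(a * t ^ 2 / 2)) * h t = Real.sqrt (2 * π * a⁻¹) * m := by
    have := myGaussMeanRepr ψ hψ1 h
    rw [← hm_def, ← ha_def] at this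
    rw [this]
    field_simp
  rw [hsplit, h2, h3, sub_self]

lemma myMeanLe (ψ : ℝ) (h : ℝ → ℝ) {C : ℝ} (hC : ∀ x, |h x| ≤ C) :
    |gaussMean ψ h| ≤ C := by
  rw [gaussMean]
  have := norm_integral_le_of_norm_le_const
    (μ := gaussianReal 0 (Real.toNNReal (1 - ψ)⁻¹)) (f := h) (C := C)
    (Filter.Eventually.of_forall fun x => by simpa [Real.norm_eq_abs] using hC x)
  simpa [Real.norm_eq_abs] using this

theorem stmt10 (ψ : ℝ) (hψ0 : 0 ≤ ψ) (hψ1 : ψ < 1) (h : ℝ → ℝ) (hmeas : Measurable h) (C : ℝ) (hC : ∀ x, |h x| ≤ C) :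
    ∀ x : ℝ,
      |(1 - ψ) * x * steinSol ψ h x + h x - gaussMean ψ h| ≤ 4 * C := by
  intro x
  have ha : 0 < 1 - ψ := by linarith
  have hC0 : 0 ≤ C := (abs_nonneg _).trans (hC 0)
  have hm : |gaussMean ψ h| ≤ C := myMeanLe ψ h hC
  have hg : ∀ t, |h t - gaussMean ψ h| ≤ 2 * C := by
    intro t
    have h1 : |h t - gaussMean ψ h| ≤ |h t| + |gaussMean ψ h| := abs_sub _ _
    linarith [hC t]
  have gmeas : Measurable fun t => h t - gaussMean ψ h := hmeas.sub measurable_const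
  have hIntg : Integrable
      (fun t : ℝ => Real.exp (-((1 - ψ) * t ^ 2 / 2)) * (h t - gaussMean ψ h)) :=
    myIntExpMul ha gmeas hg
  have hE : (0:ℝ) < Real.exp ((1 - ψ) * x ^ 2 / 2) := Real.exp_pos _
  have hEneg : Real.exp (-((1 - ψ) * x ^ 2 / 2)) = (Real.exp ((1 - ψ) * x ^ 2 / 2))⁻¹ :=
    Real.exp_neg _
  have hkey : |(1 - ψ) * x * steinSol ψ h x| ≤ 2 * C := by
    rcases lt_trichotomy x 0 with hx | hx | hx
    · -- x < 0
      have hzero := myTotalZero ψ hψ1 h hmeas hC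
      have hsum := intervalIntegral.integral_Iic_add_Ioi (μ := volume) (b := x) hIntg.integrableOn hIntg.integrableOn
      rw [hzero] at hsum
      have hI2 := myKeyIic (x := x) ha hx gmeas hg
      simp only [steinSol]
      have hIoi : ∫ t in Ioi x, Real.exp (-((1 - ψ) * t ^ 2 / 2)) * (h t - gaussMean ψ h) =
          - ∫ t in Iic x, Real.exp (-((1 - ψ) * t ^ 2 / 2)) * (h t - gaussMean ψ h) := by
        linarith
      rw [hIoi]
      set J := ∫ t in Iic x, Real.exp (-((1 - ψ) * t ^ 2 / 2)) * (h t - gaussMean ψ h) with hJ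
      have habs : |(1 - ψ) * x * (-Real.exp ((1 - ψ) * x ^ 2 / 2) * -J)| =
          (1 - ψ) * (-x) * Real.exp ((1 - ψ) * x ^ 2 / 2) * |J| := by
        rw [abs_mul, abs_mul, abs_mul, abs_neg, abs_neg, abs_of_pos ha, abs_of_pos hE,
          abs_of_neg hx]
        ring
      rw [habs, hEneg] at *
      have hx' : (-x) ≠ 0 := by linarith
      have hψ' : (1 - ψ) ≠ 0 := ne_of_gt ha
      have hE' : Real.exp ((1 - ψ) * x ^ 2 / 2) ≠ 0 := ne_of_gt hE
      refine le_trans (mul_le_mul_of_nonneg_left hI2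
        (mul_nonneg (mul_nonneg ha.le (by linarith)) hE.le)) ?_
      refine le_of_eq ?_
      have hA : (1 - ψ) * x * Real.exp ((1 - ψ) * x ^ 2 / 2) ≠ 0 := by
        refine mul_ne_zero (mul_ne_zero hψ' ?_) hE'
        linarith
      field_simp
      exact mul_div_cancel_left₀ C (by linarith)
    · -- x = 0
      rw [hx]
      simp [hC0]
    · -- x > 0
      have hI2 := myKeyIoi (x := x) ha hx gmeas hg
      simp only [steinSol]
      set J := ∫ t in Ioi x, Real.exp (-((1 - ψ) * t ^ 2 / 2)) * (h t - gaussMean ψ h) with hJ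
      have habs : |(1 - ψ) * x * (-Real.exp ((1 - ψ) * x ^ 2 / 2) * J)| =
          (1 - ψ) * x * Real.exp ((1 - ψ) * x ^ 2 / 2) * |J| := by
        rw [abs_mul, abs_mul, abs_mul, abs_neg, abs_of_pos ha, abs_of_pos hE, abs_of_pos hx]
        ring
      rw [habs, hEneg] at *
      have hx' : x ≠ 0 := ne_of_gt hx
      have hψ' : (1 - ψ) ≠ 0 := ne_of_gt ha
      have hE' : Real.exp ((1 - ψ) * x ^ 2 / 2) ≠ 0 := ne_of_gt hE
      refine le_trans (mul_le_mul_of_nonneg_left hI2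
        (by positivity : (0:ℝ) ≤ (1 - ψ) * x * Real.exp ((1 - ψ) * x ^ 2 / 2))) ?_
      refine le_of_eq ?_
      field_simp
  have hre : (1 - ψ) * x * steinSol ψ h x + h x - gaussMean ψ h =
      ((1 - ψ) * x * steinSol ψ h x) + (h x - gaussMean ψ h) := by ring
  rw [hre]
  calc |((1 - ψ) * x * steinSol ψ h x) + (h x - gaussMean ψ h)| ≤
      |(1 - ψ) * x * steinSol ψ h x| + |h x - gaussMean ψ h| := abs_add_le _ _
    _ ≤ 2 * C + 2 * C := add_le_add hkey (hg x)
    _ = 4 * C := by ring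

end
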